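/- arXiv:2106.02536 — 9 statements merged into one kernel-verified Lean document; each statement's English description precedes it below -/
import Mathlib

section
/- Let l > 0 and let Q denote the Minkowski quadratic form on ℝ^(d+2) given by Q(x) = x₀² − x₁² − ⋯ − x_{d+1}². For all real numbers t and s, the points p(t) = (t, √(l²+t²), 0, …, 0) and q(s) = (s, −√(l²+s²), 0, …, 0) satisfy Q(p(t)) = Q(q(s)) = −l² (i.e. both lie on the de Sitter hyperboloid −x₀² + Σᵢ xᵢ² = l²), and Q(p(t) − q(s)) < 0, i.e. every point of one branch of the hyperbola x₁² − x₀² = l², x₂ = ⋯ = x_{d+1} = 0 is spacelike separated from every point of the other branch. -/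
/-- Minkowski quadratic form on ℝ^(d+2): Q(x) = x₀² − x₁² − ⋯ − x_{d+1}². -/
noncomputable def minkQ (d : ℕ) (x : Fin (d + 2) → ℝ) : ℝ :=
  x 0 ^ 2 - ∑ i : Fin (d + 1), x i.succ ^ 2

/-- Point on one branch of the hyperbola x₁² − x₀² = l². -/
noncomputable def hypP (d : ℕ) (l t : ℝ) : Fin (d + 2) → ℝ :=
  fun i => if i = 0 then t else if i = 1 then Real.sqrt (l ^ 2 + t ^ 2) else 0

/-- Point on the other branch of the hyperbola x₁² − x₀² = l². -/
noncomputable def hypQ (d : ℕ) (l s : ℝ) : Fin (d + 2) → ℝ :=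
  fun i => if i = 0 then s else if i = 1 then -Real.sqrt (l ^ 2 + s ^ 2) else 0

lemma sum_succ_sq_eq (d : ℕ) (x : Fin (d + 2) → ℝ)
    (hx : ∀ j : Fin (d + 2), j ≠ 0 → j ≠ 1 → x j = 0) :
    ∑ i : Fin (d + 1), x i.succ ^ 2 = x 1 ^ 2 := by
  rw [Finset.sum_eq_single (0 : Fin (d + 1))]
  · norm_num
  · intro i _ hi
    have h0 : i.succ ≠ 0 := Fin.succ_ne_zero i
    have h1 : i.succ ≠ 1 := by
      intro h
      apply hi
      have : i.succ = (0 : Fin (d + 1)).succ := by simpa using h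
      exact Fin.succ_injective _ this
    rw [hx _ h0 h1]
    ring
  · intro h; exact absurd (Finset.mem_univ _) h

theorem deSitter_hyperbola_branches_spacelike_separated (d : ℕ) (l : ℝ) (hl : 0 < l)
    (t s : ℝ) :
    minkQ d (hypP d l t) = -l ^ 2 ∧ minkQ d (hypQ d l s) = -l ^ 2 ∧
      minkQ d (hypP d l t - hypQ d l s) < 0 := by
  set a := Real.sqrt (l ^ 2 + t ^ 2) with ha_def
  set b := Real.sqrt (l ^ 2 + s ^ 2) with hb_def
  have hlt : (0:ℝ) < l ^ 2 + t ^ 2 := by positivity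
  have hls : (0:ℝ) < l ^ 2 + s ^ 2 := by positivity
  have ha2 : a ^ 2 = l ^ 2 + t ^ 2 := Real.sq_sqrt hlt.le
  have hb2 : b ^ 2 = l ^ 2 + s ^ 2 := Real.sq_sqrt hls.le
  have ha : 0 < a := Real.sqrt_pos.mpr hlt
  have hb : 0 < b := Real.sqrt_pos.mpr hls
  have h01 : (0 : Fin (d + 2)) ≠ 1 := by simp [Fin.ext_iff]
  have hP : ∑ i : Fin (d + 1), hypP d l t i.succ ^ 2 = a ^ 2 := by
    rw [sum_succ_sq_eq d _ (fun j hj0 hj1 => by simp [hypP, hj0, hj1])]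
    simp [hypP, h01]
    rfl
  have hQ : ∑ i : Fin (d + 1), hypQ d l s i.succ ^ 2 = b ^ 2 := by
    rw [sum_succ_sq_eq d _ (fun j hj0 hj1 => by simp [hypQ, hj0, hj1])]
    simp [hypQ, h01]
    rfl
  have hPQ : ∑ i : Fin (d + 1), (hypP d l t - hypQ d l s) i.succ ^ 2 = (a + b) ^ 2 := by
    rw [sum_succ_sq_eq d _ (fun j hj0 hj1 => by
      simp [hypP, hypQ, hj0, hj1])]
    simp [hypP, hypQ, h01]
    rfl
  refine ⟨?_, ?_, ?_⟩
  · rw [minkQ, hP]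
    simp [hypP, h01]
    nlinarith [ha2]
  · rw [minkQ, hQ]
    simp [hypQ, h01]
    nlinarith [hb2]
  · rw [minkQ, hPQ]
    have h1 : (hypP d l t - hypQ d l s) 0 = t - s := by simp [hypP, hypQ, h01]
    rw [h1]
    nlinarith [mul_pos ha hb, sq_nonneg (t*b + s*a), sq_nonneg (t*b - s*a),
      sq_nonneg (a*b + t*s), sq_nonneg (a*b - t*s), sq_nonneg l, mul_pos hl hl]
end

section
/- Let d ≥ 3 be an integer, l > 0 and μ > 0, and define V(r) = 1 − μ/r^{d−2} − r²/l² for r > 0. Suppose r_c > 0 satisfies V(r_c) = 0 and V(r) < 0 for all r > r_c. Then the change in azimuthal angle along a null curve of constant t in the equatorial plane from the cosmological horizon to infinity satisfies Δφ(μ) = ∫_{r_c}^{∞} dr / (r·√(−V(r))) > π/2 (the integral being taken in [0, ∞], with the strict inequality holding in either case). -/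
open MeasureTheory

/-- The comparison integral: `∫_{a}^{∞} dr/(r √(r²/a² - 1)) = π/2`, proven via the
antiderivative `arccos (a/r)`. -/
lemma deSitter_angle_integral (a : ℝ) (ha : 0 < a) :
    (∫⁻ r in Set.Ioi a, ENNReal.ofReal (1 / (r * Real.sqrt (r ^ 2 / a ^ 2 - 1))))
      = ENNReal.ofReal (Real.pi / 2) := by
  set f : ℝ → ℝ := fun r => 1 / (r * Real.sqrt (r ^ 2 / a ^ 2 - 1)) with hf
  set g : ℝ → ℝ := fun r => Real.arccos (a / r) with hg
  have hderiv : ∀ r ∈ Set.Ioi a, HasDerivAt g (f r) r := by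
    intro r hr
    have hr0 : 0 < r := ha.trans hr
    have hlt : a / r < 1 := (div_lt_one hr0).2 hr
    have hpos : 0 < a / r := div_pos ha hr0
    have hinner : HasDerivAt (fun r : ℝ => a / r) (a * (-(r ^ 2)⁻¹)) r :=
      (hasDerivAt_inv hr0.ne').const_mul a
    have houter := Real.hasDerivAt_arccos (by linarith : a / r ≠ -1) (ne_of_lt hlt)
    have h := houter.comp r hinner
    refine h.congr_deriv ?_
    have h1 : 1 - (a / r) ^ 2 = (r ^ 2 - a ^ 2) / r ^ 2 := by
      field_simp
    have hra : a < r := hr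
    have hr2a2 : (0:ℝ) < r ^ 2 - a ^ 2 := by nlinarith
    have h2 : r ^ 2 / a ^ 2 - 1 = (r ^ 2 - a ^ 2) / a ^ 2 := by
      field_simp
    have hs1 : Real.sqrt (1 - (a / r) ^ 2) = Real.sqrt (r ^ 2 - a ^ 2) / r := by
      rw [h1, Real.sqrt_div hr2a2.le, Real.sqrt_sq hr0.le]
    have hs2 : Real.sqrt (r ^ 2 / a ^ 2 - 1) = Real.sqrt (r ^ 2 - a ^ 2) / a := by
      rw [h2, Real.sqrt_div hr2a2.le, Real.sqrt_sq ha.le]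
    have hsp : 0 < Real.sqrt (r ^ 2 - a ^ 2) := Real.sqrt_pos.2 hr2a2
    rw [hf]
    simp only
    rw [hs2, hs1]
    field_simp
  have g'pos : ∀ r ∈ Set.Ioi a, 0 ≤ f r := by
    intro r hr
    have hr0 : 0 < r := ha.trans hr
    positivity
  have htend : Filter.Tendsto g Filter.atTop (nhds (Real.pi / 2)) := by
    have h1 : Filter.Tendsto (fun r : ℝ => a / r) Filter.atTop (nhds 0) :=
      Filter.Tendsto.div_atTop tendsto_const_nhds Filter.tendsto_id
    have h2 := (Real.continuous_arccos.continuousAt (x := 0)).tendsto.comp h1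
    simpa [g, Real.arccos_zero, Function.comp_def] using h2
  have hcont : ContinuousWithinAt g (Set.Ici a) a := by
    apply ContinuousAt.continuousWithinAt
    exact Real.continuous_arccos.continuousAt.comp
      ((continuousAt_const.div continuousAt_id ha.ne'))
  have hint : ∫ r in Set.Ioi a, f r = Real.pi / 2 := by
    have := integral_Ioi_of_hasDerivAt_of_nonneg hcont hderiv g'pos htend
    rw [this]
    simp [hg, div_self ha.ne', Real.arccos_one]
  have hinteg : IntegrableOn f (Set.Ioi a) :=
    integrableOn_Ioi_deriv_of_nonneg hcont hderiv g'pos htend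
  rw [← hint, ← ofReal_integral_eq_lintegral_ofReal hinteg]
  filter_upwards [ae_restrict_mem measurableSet_Ioi] with r hr
  have hr0 : 0 < r := ha.trans hr
  positivity

theorem schwarzschild_deSitter_angle_gt_pi_div_two
    (d : ℕ) (hd : 3 ≤ d) (l μ : ℝ) (hl : 0 < l) (hμ : 0 < μ) (r_c : ℝ) (hrc : 0 < r_c)
    (hroot : 1 - μ / r_c ^ (d - 2) - r_c ^ 2 / l ^ 2 = 0)
    (hneg : ∀ r : ℝ, r_c < r → 1 - μ / r ^ (d - 2) - r ^ 2 / l ^ 2 < 0) :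
    ENNReal.ofReal (Real.pi / 2) <
      ∫⁻ r in Set.Ioi r_c,
        ENNReal.ofReal
          (1 / (r * Real.sqrt (-(1 - μ / r ^ (d - 2) - r ^ 2 / l ^ 2)))) := by
  have hpd : 0 < d - 2 := by omega
  have hrcp : 0 < r_c ^ (d - 2) := pow_pos hrc _
  -- the key pointwise inequality: for r > r_c, -V(r) < r²/r_c² - 1
  have key : ∀ r : ℝ, r_c < r →
      -(1 - μ / r ^ (d - 2) - r ^ 2 / l ^ 2) < r ^ 2 / r_c ^ 2 - 1 := by
    intro r hr
    have hr0 : 0 < r := hrc.trans hr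
    have hrp : 0 < r ^ (d - 2) := pow_pos hr0 _
    have hpow : r_c ^ d < r ^ d := pow_lt_pow_left₀ hr hrc.le (by omega)
    have hsplit : ∀ x : ℝ, x ^ d = x ^ (d - 2) * x ^ 2 := by
      intro x
      rw [← pow_add]
      congr 1
      omega
    -- from hroot : μ / r_c^(d-2) = 1 - r_c²/l²
    have hroot' : μ / r_c ^ (d - 2) = 1 - r_c ^ 2 / l ^ 2 := by linarith
    -- need: μ/r^(d-2) + r²/l² - 1 < r²/r_c² - 1
    -- i.e. μ/r^(d-2) < r²/r_c² - r²/l² = (r²/r_c²)(1 - r_c²/l²) = (r²/r_c²)(μ/r_c^(d-2))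
    have h1 : μ / r ^ (d - 2) < r ^ 2 / r_c ^ 2 * (μ / r_c ^ (d - 2)) := by
      rw [div_mul_div_comm, div_lt_div_iff₀ hrp (by positivity)]
      calc μ * (r_c ^ 2 * r_c ^ (d - 2)) = μ * r_c ^ d := by rw [hsplit]; ring
        _ < μ * r ^ d := by exact (mul_lt_mul_iff_right₀ hμ).2 hpow
        _ = r ^ 2 * μ * r ^ (d - 2) := by rw [hsplit]; ring
    have h2 : r ^ 2 / r_c ^ 2 * (μ / r_c ^ (d - 2)) = r ^ 2 / r_c ^ 2 - r ^ 2 / l ^ 2 := by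
      rw [hroot']
      field_simp
    nlinarith [h1, h2]
  have hmeas : Measurable fun r : ℝ =>
      ENNReal.ofReal (1 / (r * Real.sqrt (-(1 - μ / r ^ (d - 2) - r ^ 2 / l ^ 2)))) := by
    apply ENNReal.measurable_ofReal.comp
    apply Measurable.div measurable_const
    apply measurable_id.mul
    exact (((measurable_const.div (measurable_id.pow_const _)).const_sub 1).sub
      ((measurable_id.pow_const 2).div_const _)).neg.sqrt
  rw [← deSitter_angle_integral r_c hrc]
  apply setLIntegral_strict_mono measurableSet_Ioi (by simp) hmeas
  · rw [deSitter_angle_integral r_c hrc]; exact ENNReal.ofReal_ne_top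
  · apply Filter.Eventually.of_forall
    intro r hr
    have hr0 : 0 < r := hrc.trans (Set.mem_Ioi.1 hr)
    have hV : 0 < -(1 - μ / r ^ (d - 2) - r ^ 2 / l ^ 2) := by
      have := hneg r (Set.mem_Ioi.1 hr)
      linarith
    have hk := key r (Set.mem_Ioi.1 hr)
    have hsV : 0 < Real.sqrt (-(1 - μ / r ^ (d - 2) - r ^ 2 / l ^ 2)) := Real.sqrt_pos.2 hV
    apply ENNReal.ofReal_lt_ofReal_iff (by positivity) |>.2
    apply one_div_lt_one_div_of_lt (by positivity)
    apply (mul_lt_mul_iff_right₀ hr0).2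
    exact Real.sqrt_lt_sqrt hV.le hk
end

section
/- Let a > 0 and R > 0. The function ρ ↦ √((ρ² + a²)/(ρ² − R²)) − 1 is integrable on (R, ∞), and the time of flight T(R) = 2·∫_{R}^{∞} [√((ρ² + a²)/(ρ² − R²)) − 1] dρ − 2R satisfies T(R) > 0. -/
open MeasureTheory Filter Set Topology

theorem wormhole_time_of_flight_positive (a R : ℝ) (ha : 0 < a) (hR : 0 < R) :
    IntegrableOn (fun ρ : ℝ => Real.sqrt ((ρ ^ 2 + a ^ 2) / (ρ ^ 2 - R ^ 2)) - 1)
      (Set.Ioi R) ∧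
    0 < 2 * (∫ ρ in Set.Ioi R, (Real.sqrt ((ρ ^ 2 + a ^ 2) / (ρ ^ 2 - R ^ 2)) - 1))
        - 2 * R := by
  set f : ℝ → ℝ := fun ρ => Real.sqrt ((ρ ^ 2 + a ^ 2) / (ρ ^ 2 - R ^ 2)) - 1 with hf_def
  set g : ℝ → ℝ := fun ρ => ρ / Real.sqrt (ρ ^ 2 - R ^ 2) - 1 with hg_def
  set m : ℝ → ℝ := fun ρ => (a ^ 2 + R ^ 2) / (ρ * Real.sqrt (ρ ^ 2 - R ^ 2)) with hm_def
  -- basic facts for ρ > R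
  have hqpos : ∀ ρ : ℝ, R < ρ → 0 < Real.sqrt (ρ ^ 2 - R ^ 2) := by
    intro ρ hρ
    rw [Real.sqrt_pos]
    nlinarith
  have hqlt : ∀ ρ : ℝ, R < ρ → Real.sqrt (ρ ^ 2 - R ^ 2) < ρ := by
    intro ρ hρ
    have h1 : Real.sqrt (ρ ^ 2 - R ^ 2) < Real.sqrt (ρ ^ 2) := by
      apply Real.sqrt_lt_sqrt (by nlinarith) (by nlinarith)
    rwa [Real.sqrt_sq (by linarith : (0:ℝ) ≤ ρ)] at h1
  have hq2 : ∀ ρ : ℝ, R < ρ → (Real.sqrt (ρ ^ 2 - R ^ 2)) ^ 2 = ρ ^ 2 - R ^ 2 := by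
    intro ρ hρ
    exact Real.sq_sqrt (by nlinarith)
  -- derivative of sqrt(ρ² - R²)
  have hderiv_q : ∀ ρ : ℝ, R < ρ →
      HasDerivAt (fun x : ℝ => Real.sqrt (x ^ 2 - R ^ 2))
        (ρ / Real.sqrt (ρ ^ 2 - R ^ 2)) ρ := by
    intro ρ hρ
    have h1 : HasDerivAt (fun x : ℝ => x ^ 2 - R ^ 2) (2 * ρ) ρ := by
      simpa using (hasDerivAt_pow 2 ρ).sub_const (R ^ 2)
    have hne : ρ ^ 2 - R ^ 2 ≠ 0 := by nlinarith
    have h2 := (Real.hasDerivAt_sqrt hne).comp ρ h1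
    refine h2.congr_deriv ?_
    have := hqpos ρ hρ
    field_simp
  -- antiderivative G for g
  have hderiv_G : ∀ ρ ∈ Set.Ioi R,
      HasDerivAt (fun x : ℝ => Real.sqrt (x ^ 2 - R ^ 2) - x) (g ρ) ρ := by
    intro ρ hρ
    exact (hderiv_q ρ hρ).sub (hasDerivAt_id ρ)
  have hGcont : ContinuousWithinAt (fun x : ℝ => Real.sqrt (x ^ 2 - R ^ 2) - x)
      (Set.Ici R) R := by
    apply Continuous.continuousWithinAt
    exact (Real.continuous_sqrt.comp (by continuity)).sub continuous_id
  have hgpos : ∀ ρ ∈ Set.Ioi R, 0 ≤ g ρ := by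
    intro ρ hρ
    have h1 := hqpos ρ hρ
    have h2 := hqlt ρ hρ
    have : (1:ℝ) ≤ ρ / Real.sqrt (ρ ^ 2 - R ^ 2) := (one_le_div h1).mpr h2.le
    simp only [hg_def]
    linarith
  have hGlim : Tendsto (fun x : ℝ => Real.sqrt (x ^ 2 - R ^ 2) - x) atTop (𝓝 0) := by
    have hub : ∀ᶠ x in atTop, Real.sqrt (x ^ 2 - R ^ 2) - x ≤ 0 := by
      filter_upwards [eventually_gt_atTop R] with x hx
      have := hqlt x hx; linarith
    have hlb : ∀ᶠ x in atTop, -(R ^ 2 / x) ≤ Real.sqrt (x ^ 2 - R ^ 2) - x := by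
      filter_upwards [eventually_gt_atTop R] with x hx
      have hx0 : 0 < x := lt_trans hR hx
      have h1 : x - R ^ 2 / x ≤ Real.sqrt (x ^ 2 - R ^ 2) := by
        apply Real.le_sqrt_of_sq_le
        have : (x - R ^ 2 / x) ^ 2 = x ^ 2 - 2 * R ^ 2 + (R ^ 2 / x) ^ 2 := by
          field_simp; ring
        rw [this]
        have h2 : (R ^ 2 / x) ^ 2 ≤ R ^ 2 := by
          rw [div_pow]
          rw [div_le_iff₀ (by positivity)]
          have hxR : R ^ 2 ≤ x ^ 2 := by nlinarith
          nlinarith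
        linarith
      linarith
    have hlb0 : Tendsto (fun x : ℝ => -(R ^ 2 / x)) atTop (𝓝 0) := by
      have : Tendsto (fun x : ℝ => R ^ 2 / x) atTop (𝓝 0) :=
        tendsto_const_nhds.div_atTop tendsto_id
      simpa using this.neg
    exact tendsto_of_tendsto_of_tendsto_of_le_of_le' hlb0 tendsto_const_nhds hlb hub
  have hg_val : ∫ ρ in Set.Ioi R, g ρ = R := by
    have := integral_Ioi_of_hasDerivAt_of_nonneg hGcont hderiv_G hgpos hGlim
    rw [this]
    simp [Real.sqrt_eq_zero', hR.le]
  have hg_int : IntegrableOn g (Set.Ioi R) :=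
    integrableOn_Ioi_deriv_of_nonneg hGcont hderiv_G hgpos hGlim
  -- antiderivative M for m
  have hderiv_M : ∀ ρ ∈ Set.Ioi R,
      HasDerivAt (fun x : ℝ => (a ^ 2 + R ^ 2) / R *
        Real.arctan (Real.sqrt (x ^ 2 - R ^ 2) / R)) (m ρ) ρ := by
    intro ρ hρ
    have hρR : R < ρ := hρ
    have hu : HasDerivAt (fun x : ℝ => Real.sqrt (x ^ 2 - R ^ 2) / R)
        (ρ / Real.sqrt (ρ ^ 2 - R ^ 2) / R) ρ := (hderiv_q ρ hρR).div_const R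
    have harctan := (Real.hasDerivAt_arctan (Real.sqrt (ρ ^ 2 - R ^ 2) / R)).comp ρ hu
    have := harctan.const_mul ((a ^ 2 + R ^ 2) / R)
    refine this.congr_deriv ?_
    have hq := hqpos ρ hρR
    have hq2' := hq2 ρ hρR
    have hρ0 : 0 < ρ := lt_trans hR hρR
    simp only [hm_def]
    rw [div_pow, hq2']
    field_simp
    ring
  have hMcont : ContinuousWithinAt (fun x : ℝ => (a ^ 2 + R ^ 2) / R *
      Real.arctan (Real.sqrt (x ^ 2 - R ^ 2) / R)) (Set.Ici R) R := by
    apply Continuous.continuousWithinAt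
    exact continuous_const.mul
      (Real.continuous_arctan.comp ((Real.continuous_sqrt.comp (by continuity)).div_const R))
  have hmpos : ∀ ρ ∈ Set.Ioi R, 0 ≤ m ρ := by
    intro ρ hρ
    have h1 := hqpos ρ hρ
    have hρ0 : 0 < ρ := lt_trans hR hρ
    simp only [hm_def]
    positivity
  have hMlim : Tendsto (fun x : ℝ => (a ^ 2 + R ^ 2) / R *
      Real.arctan (Real.sqrt (x ^ 2 - R ^ 2) / R)) atTop
      (𝓝 ((a ^ 2 + R ^ 2) / R * (Real.pi / 2))) := by
    apply Tendsto.const_mul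
    have h1 : Tendsto (fun x : ℝ => Real.sqrt (x ^ 2 - R ^ 2) / R) atTop atTop := by
      apply Filter.Tendsto.atTop_div_const hR
      apply tendsto_atTop_mono' _ _ (tendsto_atTop_add_const_right atTop (-R) tendsto_id)
      filter_upwards [eventually_gt_atTop R] with x hx
      apply Real.le_sqrt_of_sq_le
      simp only [id_eq]
      nlinarith [mul_lt_mul_of_pos_left hx hR]
    exact (tendsto_nhds_of_tendsto_nhdsWithin Real.tendsto_arctan_atTop).comp h1
  have hm_int : IntegrableOn m (Set.Ioi R) :=
    integrableOn_Ioi_deriv_of_nonneg hMcont hderiv_M hmpos hMlim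
  -- rewrite f on Ioi R
  have hf_eq : ∀ ρ : ℝ, R < ρ →
      f ρ = Real.sqrt (ρ ^ 2 + a ^ 2) / Real.sqrt (ρ ^ 2 - R ^ 2) - 1 := by
    intro ρ hρ
    simp only [hf_def]
    rw [Real.sqrt_div (by positivity)]
  have hupos : ∀ ρ : ℝ, R < ρ → ρ < Real.sqrt (ρ ^ 2 + a ^ 2) := by
    intro ρ hρ
    have hρ0 : 0 < ρ := lt_trans hR hρ
    have : Real.sqrt (ρ ^ 2) < Real.sqrt (ρ ^ 2 + a ^ 2) :=
      Real.sqrt_lt_sqrt (by positivity) (by nlinarith)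
    rwa [Real.sqrt_sq hρ0.le] at this
  -- f nonneg and bounded by m
  have hf_nonneg : ∀ ρ : ℝ, R < ρ → 0 ≤ f ρ := by
    intro ρ hρ
    rw [hf_eq ρ hρ]
    have h1 := hqpos ρ hρ
    have h2 := hqlt ρ hρ
    have h3 := hupos ρ hρ
    have : (1:ℝ) ≤ Real.sqrt (ρ ^ 2 + a ^ 2) / Real.sqrt (ρ ^ 2 - R ^ 2) :=
      (one_le_div h1).mpr (by linarith)
    linarith
  have hf_le_m : ∀ ρ : ℝ, R < ρ → f ρ ≤ m ρ := by
    intro ρ hρ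
    rw [hf_eq ρ hρ]
    have hq := hqpos ρ hρ
    have hq2' := hq2 ρ hρ
    have hρ0 : 0 < ρ := lt_trans hR hρ
    have hu0 : 0 ≤ Real.sqrt (ρ ^ 2 + a ^ 2) := Real.sqrt_nonneg _
    have hu2 : (Real.sqrt (ρ ^ 2 + a ^ 2)) ^ 2 = ρ ^ 2 + a ^ 2 :=
      Real.sq_sqrt (by positivity)
    have huρ := hupos ρ hρ
    have hwq := hqlt ρ hρ
    have hd : 0 ≤ Real.sqrt (ρ ^ 2 + a ^ 2) - Real.sqrt (ρ ^ 2 - R ^ 2) := by linarith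
    have h6 : (Real.sqrt (ρ ^ 2 + a ^ 2) - Real.sqrt (ρ ^ 2 - R ^ 2)) *
        (Real.sqrt (ρ ^ 2 + a ^ 2) + Real.sqrt (ρ ^ 2 - R ^ 2)) = a ^ 2 + R ^ 2 := by
      linear_combination hu2 - hq2'
    have h5 : (Real.sqrt (ρ ^ 2 + a ^ 2) - Real.sqrt (ρ ^ 2 - R ^ 2)) * ρ ≤ a ^ 2 + R ^ 2 := by
      rw [← h6]
      apply mul_le_mul_of_nonneg_left _ hd
      linarith
    simp only [hm_def]
    rw [div_sub_one hq.ne', div_le_div_iff₀ hq (by positivity)]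
    nlinarith [mul_le_mul_of_nonneg_right h5 hq.le]
  -- f is measurable
  have hf_meas : AEStronglyMeasurable f (volume.restrict (Set.Ioi R)) := by
    apply Measurable.aestronglyMeasurable
    apply Measurable.sub _ measurable_const
    apply Real.continuous_sqrt.measurable.comp
    exact ((measurable_id.pow_const 2).add_const _).div
      ((measurable_id.pow_const 2).sub_const _)
  have hf_int : IntegrableOn f (Set.Ioi R) := by
    apply Integrable.mono' hm_int hf_meas
    filter_upwards [ae_restrict_mem measurableSet_Ioi] with ρ hρ
    rw [Real.norm_eq_abs, abs_of_nonneg (hf_nonneg ρ hρ)]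
    exact hf_le_m ρ hρ
  refine ⟨hf_int, ?_⟩
  -- strict inequality g < f pointwise
  have hlt : ∀ ρ ∈ Set.Ioi R, 0 < f ρ - g ρ := by
    intro ρ hρ
    have hρR : R < ρ := hρ
    rw [hf_eq ρ hρR]
    simp only [hg_def]
    have h1 := hqpos ρ hρR
    have h3 := hupos ρ hρR
    have : ρ / Real.sqrt (ρ ^ 2 - R ^ 2) <
        Real.sqrt (ρ ^ 2 + a ^ 2) / Real.sqrt (ρ ^ 2 - R ^ 2) :=
      (div_lt_div_iff_of_pos_right h1).mpr h3
    linarith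
  have key : 0 < ∫ ρ in Set.Ioi R, (f ρ - g ρ) := by
    rw [setIntegral_pos_iff_support_of_nonneg_ae]
    · refine lt_of_lt_of_le ?_ (measure_mono (fun x hx =>
        ⟨fun h => (hlt x hx).ne' h, hx⟩))
      rw [Real.volume_Ioi]
      exact ENNReal.zero_lt_top
    · filter_upwards [ae_restrict_mem measurableSet_Ioi] with ρ hρ
      exact (hlt ρ hρ).le
    · exact hf_int.sub hg_int
  have hsub : ∫ ρ in Set.Ioi R, (f ρ - g ρ) =
      (∫ ρ in Set.Ioi R, f ρ) - ∫ ρ in Set.Ioi R, g ρ :=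
    integral_sub hf_int hg_int
  rw [hsub, hg_val] at key
  linarith
end

section
/- Let a > 0 and for R > 0 set T(R) = 2·∫_{R}^{∞} [√((ρ² + a²)/(ρ² − R²)) − 1] dρ − 2R. Then T(R) → 0 as R → ∞. -/
open MeasureTheory Filter Set Real Topology

lemma wtof_aux (a R : ℝ) (ha : 0 < a) (hR : 0 < R) :
    0 ≤ 2 * (∫ ρ in Set.Ioi R, (Real.sqrt ((ρ ^ 2 + a ^ 2) / (ρ ^ 2 - R ^ 2)) - 1)) - 2 * R ∧
    2 * (∫ ρ in Set.Ioi R, (Real.sqrt ((ρ ^ 2 + a ^ 2) / (ρ ^ 2 - R ^ 2)) - 1)) - 2 * R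
      ≤ π * a ^ 2 / 2 / R := by
  -- basic facts on Ioi R
  have hsq : ∀ ρ ∈ Ioi R, 0 < ρ ^ 2 - R ^ 2 := fun ρ hρ => by
    have : R < ρ := hρ; nlinarith
  have hρpos : ∀ ρ ∈ Ioi R, 0 < ρ := fun ρ hρ => hR.trans hρ
  have hspos : ∀ ρ ∈ Ioi R, 0 < Real.sqrt (ρ ^ 2 - R ^ 2) := fun ρ hρ =>
    Real.sqrt_pos.mpr (hsq ρ hρ)
  -- derivative of G(x) = sqrt(x^2 - R^2) - x
  have hsder : ∀ ρ ∈ Ioi R, HasDerivAt (fun x => Real.sqrt (x ^ 2 - R ^ 2))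
      (ρ / Real.sqrt (ρ ^ 2 - R ^ 2)) ρ := by
    intro ρ hρ
    have h1 : HasDerivAt (fun x : ℝ => x ^ 2 - R ^ 2) (2 * ρ) ρ := by
      simpa using (hasDerivAt_pow 2 ρ).sub_const (R ^ 2)
    have h2 := (Real.hasDerivAt_sqrt (ne_of_gt (hsq ρ hρ))).comp ρ h1
    refine h2.congr_deriv ?_
    have := (hspos ρ hρ).ne'
    field_simp
  have hG : ∀ ρ ∈ Ioi R, HasDerivAt (fun x => Real.sqrt (x ^ 2 - R ^ 2) - x)
      (ρ / Real.sqrt (ρ ^ 2 - R ^ 2) - 1) ρ := fun ρ hρ =>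
    (hsder ρ hρ).sub (hasDerivAt_id ρ)
  have hGnn : ∀ ρ ∈ Ioi R, 0 ≤ ρ / Real.sqrt (ρ ^ 2 - R ^ 2) - 1 := by
    intro ρ hρ
    have h1 : Real.sqrt (ρ ^ 2 - R ^ 2) ≤ ρ := by
      have := Real.sqrt_le_sqrt (show ρ ^ 2 - R ^ 2 ≤ ρ ^ 2 by nlinarith)
      rwa [Real.sqrt_sq (hρpos ρ hρ).le] at this
    have := (one_le_div (hspos ρ hρ)).mpr h1
    linarith
  have hGcont : ContinuousWithinAt (fun x => Real.sqrt (x ^ 2 - R ^ 2) - x) (Ici R) R :=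
    ((Real.continuous_sqrt.comp ((continuous_pow 2).sub continuous_const)).sub continuous_id).continuousWithinAt
  have hGtend : Tendsto (fun x => Real.sqrt (x ^ 2 - R ^ 2) - x) atTop (𝓝 0) := by
    have hb : Tendsto (fun x : ℝ => Real.sqrt (x ^ 2 - R ^ 2) + x) atTop atTop :=
      tendsto_atTop_mono (fun x => le_add_of_nonneg_left (Real.sqrt_nonneg _)) tendsto_id
    have h0 : Tendsto (fun x : ℝ => -R ^ 2 / (Real.sqrt (x ^ 2 - R ^ 2) + x)) atTop (𝓝 0) :=
      tendsto_const_nhds.div_atTop hb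
    apply h0.congr'
    filter_upwards [eventually_gt_atTop R] with x hx
    have hs2 : Real.sqrt (x ^ 2 - R ^ 2) ^ 2 = x ^ 2 - R ^ 2 :=
      Real.sq_sqrt (hsq x hx).le
    have hne : Real.sqrt (x ^ 2 - R ^ 2) + x ≠ 0 := by
      have := hspos x hx; have := hρpos x hx; positivity
    rw [div_eq_iff hne]
    nlinarith [hs2]
  have hGint : IntegrableOn (fun ρ => ρ / Real.sqrt (ρ ^ 2 - R ^ 2) - 1) (Ioi R) :=
    integrableOn_Ioi_deriv_of_nonneg hGcont hG hGnn hGtend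
  have hGval : ∫ ρ in Ioi R, (ρ / Real.sqrt (ρ ^ 2 - R ^ 2) - 1) = R := by
    rw [integral_Ioi_of_hasDerivAt_of_nonneg hGcont hG hGnn hGtend]
    simp
  -- the bounding function h and its antiderivative F
  have hF : ∀ ρ ∈ Ioi R, HasDerivAt
      (fun x => a ^ 2 / (2 * R) * Real.arctan (Real.sqrt (x ^ 2 - R ^ 2) / R))
      (a ^ 2 / (2 * R) * (R / (ρ * Real.sqrt (ρ ^ 2 - R ^ 2)))) ρ := by
    intro ρ hρ
    have hu : HasDerivAt (fun x => Real.sqrt (x ^ 2 - R ^ 2) / R)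
        ((ρ / Real.sqrt (ρ ^ 2 - R ^ 2)) / R) ρ := (hsder ρ hρ).div_const R
    have harc := (Real.hasDerivAt_arctan (Real.sqrt (ρ ^ 2 - R ^ 2) / R)).comp ρ hu
    have := harc.const_mul (a ^ 2 / (2 * R))
    refine this.congr_deriv ?_
    have hs2 : Real.sqrt (ρ ^ 2 - R ^ 2) ^ 2 = ρ ^ 2 - R ^ 2 := Real.sq_sqrt (hsq ρ hρ).le
    have hsne := (hspos ρ hρ).ne'
    have hρne := (hρpos ρ hρ).ne'
    have hRne := hR.ne'
    have hquot : 1 + (Real.sqrt (ρ ^ 2 - R ^ 2) / R) ^ 2 = ρ ^ 2 / R ^ 2 := by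
      field_simp
      linarith [hs2]
    rw [hquot]
    field_simp
  have hFnn : ∀ ρ ∈ Ioi R, 0 ≤ a ^ 2 / (2 * R) * (R / (ρ * Real.sqrt (ρ ^ 2 - R ^ 2))) := by
    intro ρ hρ
    have := hspos ρ hρ; have := hρpos ρ hρ
    positivity
  have hFcont : ContinuousWithinAt
      (fun x => a ^ 2 / (2 * R) * Real.arctan (Real.sqrt (x ^ 2 - R ^ 2) / R)) (Ici R) R :=
    (continuous_const.mul (Real.continuous_arctan.comp
      ((Real.continuous_sqrt.comp ((continuous_pow 2).sub continuous_const)).div_const R))).continuousWithinAt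
  have hFtend : Tendsto
      (fun x => a ^ 2 / (2 * R) * Real.arctan (Real.sqrt (x ^ 2 - R ^ 2) / R))
      atTop (𝓝 (a ^ 2 / (2 * R) * (π / 2))) := by
    have h2 : Tendsto (fun x : ℝ => Real.sqrt (x ^ 2 - R ^ 2) / R) atTop atTop := by
      apply tendsto_atTop_mono' atTop
        (show ∀ᶠ x : ℝ in atTop, x / 2 / R ≤ Real.sqrt (x ^ 2 - R ^ 2) / R from ?_)
        ((tendsto_id.atTop_div_const two_pos).atTop_div_const hR)
      filter_upwards [eventually_ge_atTop (2 * R)] with x hx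
      have hx0 : 0 ≤ x := le_trans (by positivity) hx
      have h3 : (x / 2) ^ 2 ≤ x ^ 2 - R ^ 2 := by nlinarith
      have := Real.sqrt_le_sqrt h3
      rw [Real.sqrt_sq (by positivity)] at this
      exact div_le_div_of_nonneg_right this hR.le
    exact ((tendsto_nhds_of_tendsto_nhdsWithin Real.tendsto_arctan_atTop).comp h2).const_mul _
  have hHint : IntegrableOn
      (fun ρ => a ^ 2 / (2 * R) * (R / (ρ * Real.sqrt (ρ ^ 2 - R ^ 2)))) (Ioi R) :=
    integrableOn_Ioi_deriv_of_nonneg hFcont hF hFnn hFtend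
  have hHval : ∫ ρ in Ioi R, a ^ 2 / (2 * R) * (R / (ρ * Real.sqrt (ρ ^ 2 - R ^ 2)))
      = a ^ 2 / (2 * R) * (π / 2) := by
    rw [integral_Ioi_of_hasDerivAt_of_nonneg hFcont hF hFnn hFtend]
    simp
  -- the difference term d
  set d : ℝ → ℝ := fun ρ => (Real.sqrt (ρ ^ 2 + a ^ 2) - ρ) / Real.sqrt (ρ ^ 2 - R ^ 2) with hd_def
  have hd0 : ∀ ρ ∈ Ioi R, 0 ≤ d ρ := by
    intro ρ hρ
    apply div_nonneg _ (Real.sqrt_nonneg _)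
    have : ρ ≤ Real.sqrt (ρ ^ 2 + a ^ 2) := by
      have := Real.sqrt_le_sqrt (show ρ ^ 2 ≤ ρ ^ 2 + a ^ 2 by nlinarith)
      rwa [Real.sqrt_sq (hρpos ρ hρ).le] at this
    linarith
  have hdh : ∀ ρ ∈ Ioi R, d ρ ≤ a ^ 2 / (2 * R) * (R / (ρ * Real.sqrt (ρ ^ 2 - R ^ 2))) := by
    intro ρ hρ
    have hρ0 := hρpos ρ hρ
    have hs0 := hspos ρ hρ
    have hnum : Real.sqrt (ρ ^ 2 + a ^ 2) - ρ ≤ a ^ 2 / (2 * ρ) := by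
      have h1 : ρ ^ 2 + a ^ 2 ≤ (ρ + a ^ 2 / (2 * ρ)) ^ 2 := by
        have h2 : (ρ + a ^ 2 / (2 * ρ)) ^ 2 = ρ ^ 2 + a ^ 2 + (a ^ 2 / (2 * ρ)) ^ 2 := by
          field_simp; ring
        nlinarith [sq_nonneg (a ^ 2 / (2 * ρ))]
      have := Real.sqrt_le_sqrt h1
      rw [Real.sqrt_sq (by positivity)] at this
      linarith
    have key : a ^ 2 / (2 * R) * (R / (ρ * Real.sqrt (ρ ^ 2 - R ^ 2)))
        = (a ^ 2 / (2 * ρ)) / Real.sqrt (ρ ^ 2 - R ^ 2) := by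
      field_simp
    rw [key, hd_def]
    exact div_le_div_of_nonneg_right hnum hs0.le
  have hdmeas : AEStronglyMeasurable d (volume.restrict (Ioi R)) := by
    apply Measurable.aestronglyMeasurable
    exact ((Real.continuous_sqrt.comp ((continuous_pow 2).add continuous_const)).sub continuous_id).measurable.div
      (Real.continuous_sqrt.comp ((continuous_pow 2).sub continuous_const)).measurable
  have hdint : IntegrableOn d (Ioi R) := by
    refine hHint.mono' hdmeas ?_
    rw [ae_restrict_iff' measurableSet_Ioi]
    filter_upwards with ρ hρ
    rw [Real.norm_eq_abs, abs_of_nonneg (hd0 ρ hρ)]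
    exact hdh ρ hρ
  -- splitting the original integral
  have hsplit : ∫ ρ in Ioi R, (Real.sqrt ((ρ ^ 2 + a ^ 2) / (ρ ^ 2 - R ^ 2)) - 1)
      = (∫ ρ in Ioi R, (ρ / Real.sqrt (ρ ^ 2 - R ^ 2) - 1)) + ∫ ρ in Ioi R, d ρ := by
    rw [← integral_add hGint hdint]
    apply setIntegral_congr_fun measurableSet_Ioi
    intro ρ hρ
    have hs0 := hspos ρ hρ
    have hdiv : Real.sqrt ((ρ ^ 2 + a ^ 2) / (ρ ^ 2 - R ^ 2))
        = Real.sqrt (ρ ^ 2 + a ^ 2) / Real.sqrt (ρ ^ 2 - R ^ 2) :=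
      Real.sqrt_div (by positivity) _
    simp only [hd_def]
    rw [hdiv, sub_div]
    ring
  have hd_nn_int : 0 ≤ ∫ ρ in Ioi R, d ρ := setIntegral_nonneg measurableSet_Ioi hd0
  have hd_le_int : ∫ ρ in Ioi R, d ρ ≤ a ^ 2 / (2 * R) * (π / 2) := by
    rw [← hHval]
    exact setIntegral_mono_on hdint hHint measurableSet_Ioi hdh
  constructor
  · rw [hsplit, hGval]; linarith
  · rw [hsplit, hGval]
    have : π * a ^ 2 / 2 / R = 2 * (a ^ 2 / (2 * R) * (π / 2)) := by
      field_simp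
    rw [this]; linarith

theorem wormhole_time_of_flight_tendsto_zero (a : ℝ) (ha : 0 < a) :
    Tendsto
      (fun R : ℝ =>
        2 * (∫ ρ in Set.Ioi R, (Real.sqrt ((ρ ^ 2 + a ^ 2) / (ρ ^ 2 - R ^ 2)) - 1))
          - 2 * R)
      atTop (nhds 0) := by
  apply squeeze_zero' (g := fun R => π * a ^ 2 / 2 / R)
  · filter_upwards [eventually_gt_atTop 0] with R hR using (wtof_aux a R ha hR).1
  · filter_upwards [eventually_gt_atTop 0] with R hR using (wtof_aux a R ha hR).2
  · exact tendsto_const_nhds.div_atTop tendsto_id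
end

section
/- Let a > 0 and R > 0. The function r ↦ √((R² + a²)/((r² − R²)(r² + a²))) is integrable on (R, ∞) and 2·∫_{R}^{∞} √((R² + a²)/((r² − R²)(r² + a²))) dr ≥ π. -/
open MeasureTheory Set Real

lemma wh_sqrt_aux {R r : ℝ} (hR : 0 < R) (hr : R < r) :
    Real.sqrt (1 - (R / r) ^ 2) = Real.sqrt (r ^ 2 - R ^ 2) / r := by
  have hr0 : 0 < r := hR.trans hr
  have h1 : 1 - (R / r) ^ 2 = (r ^ 2 - R ^ 2) / r ^ 2 := by field_simp
  rw [h1, Real.sqrt_div (by nlinarith : (0:ℝ) ≤ r ^ 2 - R ^ 2), Real.sqrt_sq hr0.le]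

lemma wh_base_deriv {R r : ℝ} (hR : 0 < R) (hr : R < r) :
    HasDerivAt (fun x : ℝ => Real.arccos (R / x))
      (R / (r * Real.sqrt (r ^ 2 - R ^ 2))) r := by
  have hr0 : 0 < r := hR.trans hr
  have hq0 : 0 < R / r := div_pos hR hr0
  have hq1 : R / r < 1 := (div_lt_one hr0).2 hr
  have hs : 0 < Real.sqrt (r ^ 2 - R ^ 2) := Real.sqrt_pos.2 (by nlinarith)
  have hinner : HasDerivAt (fun x : ℝ => R / x) (R * (-(r ^ 2)⁻¹)) r := by
    simpa [div_eq_mul_inv] using (hasDerivAt_inv hr0.ne').const_mul R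
  have h := (Real.hasDerivAt_arccos (by linarith) (ne_of_lt hq1)).comp r hinner
  refine h.congr_deriv ?_
  rw [wh_sqrt_aux hR hr]
  field_simp

lemma wh_base_integral {R : ℝ} (hR : 0 < R) :
    IntegrableOn (fun r : ℝ => R / (r * Real.sqrt (r ^ 2 - R ^ 2))) (Set.Ioi R) ∧
    ∫ r in Set.Ioi R, R / (r * Real.sqrt (r ^ 2 - R ^ 2)) = π / 2 := by
  have hcont : ContinuousWithinAt (fun x : ℝ => Real.arccos (R / x)) (Set.Ici R) R :=
    (Real.continuous_arccos.continuousAt.comp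
      ((continuousAt_const.div continuousAt_id hR.ne'))).continuousWithinAt
  have hderiv : ∀ r ∈ Set.Ioi R, HasDerivAt (fun x : ℝ => Real.arccos (R / x))
      (R / (r * Real.sqrt (r ^ 2 - R ^ 2))) r := fun r hr => wh_base_deriv hR hr
  have hpos : ∀ r ∈ Set.Ioi R, 0 ≤ R / (r * Real.sqrt (r ^ 2 - R ^ 2)) := by
    intro r hr
    have hr0 : 0 < r := hR.trans hr
    positivity
  have hlim : Filter.Tendsto (fun x : ℝ => Real.arccos (R / x)) Filter.atTop (nhds (π / 2)) := by
    have h1 : Filter.Tendsto (fun x : ℝ => R / x) Filter.atTop (nhds 0) :=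
      Filter.Tendsto.div_atTop tendsto_const_nhds Filter.tendsto_id
    have := (Real.continuous_arccos.tendsto 0).comp h1
    simpa [Real.arccos_zero, Function.comp_def] using this
  refine ⟨integrableOn_Ioi_deriv_of_nonneg hcont hderiv hpos hlim, ?_⟩
  rw [integral_Ioi_of_hasDerivAt_of_nonneg hcont hderiv hpos hlim]
  simp [div_self hR.ne', Real.arccos_one]

lemma wh_base_as_sqrt {R r : ℝ} (hR : 0 < R) (hr : R < r) :
    R / (r * Real.sqrt (r ^ 2 - R ^ 2)) =
      Real.sqrt (R ^ 2 / ((r ^ 2 - R ^ 2) * r ^ 2)) := by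
  have hr0 : 0 < r := hR.trans hr
  have hs : (0:ℝ) ≤ r ^ 2 - R ^ 2 := by nlinarith
  rw [Real.sqrt_div (sq_nonneg R), Real.sqrt_mul hs, Real.sqrt_sq hR.le, Real.sqrt_sq hr0.le]
  ring

theorem wormhole_angle_change_ge_pi (a R : ℝ) (ha : 0 < a) (hR : 0 < R) :
    IntegrableOn
      (fun r : ℝ => Real.sqrt ((R ^ 2 + a ^ 2) / ((r ^ 2 - R ^ 2) * (r ^ 2 + a ^ 2))))
      (Set.Ioi R) ∧
    Real.pi ≤
      2 * ∫ r in Set.Ioi R,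
        Real.sqrt ((R ^ 2 + a ^ 2) / ((r ^ 2 - R ^ 2) * (r ^ 2 + a ^ 2))) := by
  obtain ⟨hgInt, hgVal⟩ := wh_base_integral hR
  set f : ℝ → ℝ :=
    fun r : ℝ => Real.sqrt ((R ^ 2 + a ^ 2) / ((r ^ 2 - R ^ 2) * (r ^ 2 + a ^ 2))) with hf
  set g : ℝ → ℝ := fun r : ℝ => R / (r * Real.sqrt (r ^ 2 - R ^ 2)) with hg
  have hC : 0 < Real.sqrt (R ^ 2 + a ^ 2) / R := by positivity
  -- pointwise bounds on Ioi R
  have hlow : ∀ r ∈ Set.Ioi R, g r ≤ f r := by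
    intro r hr
    have hr' : R < r := hr
    have hr0 : 0 < r := hR.trans hr'
    have hs : (0:ℝ) < r ^ 2 - R ^ 2 := by nlinarith
    have hgr : g r = Real.sqrt (R ^ 2 / ((r ^ 2 - R ^ 2) * r ^ 2)) := wh_base_as_sqrt hR hr'
    rw [hgr, hf]
    apply Real.sqrt_le_sqrt
    rw [div_le_div_iff₀ (by positivity) (by positivity)]
    nlinarith [mul_nonneg (sq_nonneg a) (sq_nonneg (r ^ 2 - R ^ 2))]
  have hupp : ∀ r ∈ Set.Ioi R, f r ≤ (Real.sqrt (R ^ 2 + a ^ 2) / R) * g r := by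
    intro r hr
    have hr' : R < r := hr
    have hr0 : 0 < r := hR.trans hr'
    have hs : (0:ℝ) < r ^ 2 - R ^ 2 := by nlinarith
    have h1 : f r ≤ Real.sqrt ((R ^ 2 + a ^ 2) / ((r ^ 2 - R ^ 2) * r ^ 2)) := by
      apply Real.sqrt_le_sqrt
      rw [div_le_div_iff₀ (by positivity) (by positivity)]
      nlinarith [mul_nonneg (mul_nonneg (by positivity : (0:ℝ) ≤ R ^ 2 + a ^ 2) hs.le) (sq_nonneg a)]
    refine h1.trans_eq ?_
    have hs' : (0:ℝ) ≤ r ^ 2 - R ^ 2 := hs.le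
    rw [hg]
    rw [Real.sqrt_div (by positivity : (0:ℝ) ≤ R ^ 2 + a ^ 2), Real.sqrt_mul hs',
      Real.sqrt_sq hr0.le]
    have hsr : Real.sqrt (r ^ 2 - R ^ 2) ≠ 0 := (Real.sqrt_pos.2 hs).ne'
    field_simp
  have hfnonneg : ∀ r, 0 ≤ f r := fun r => Real.sqrt_nonneg _
  have hfmeas : AEStronglyMeasurable f (volume.restrict (Set.Ioi R)) := by
    apply Measurable.aestronglyMeasurable
    exact (measurable_const.div ((measurable_id.pow_const 2).sub_const _ |>.mul
      ((measurable_id.pow_const 2).add_const _))).sqrt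
  have hfInt : IntegrableOn f (Set.Ioi R) := by
    refine Integrable.mono' (hgInt.const_mul (Real.sqrt (R ^ 2 + a ^ 2) / R)) hfmeas ?_
    filter_upwards [ae_restrict_mem measurableSet_Ioi] with r hr
    rw [Real.norm_eq_abs, abs_of_nonneg (hfnonneg r)]
    exact hupp r hr
  refine ⟨hfInt, ?_⟩
  have hmono : ∫ r in Set.Ioi R, g r ≤ ∫ r in Set.Ioi R, f r :=
    setIntegral_mono_on hgInt hfInt measurableSet_Ioi hlow
  rw [hgVal] at hmono
  linarith
end

section
/- Let a > 0 and let h be a real number with h² < a². Suppose r : [0, T] → ℝ is differentiable with r(0) = r₀ < 0 and r′(t) = √(1 − h²/(r(t)² + a²)) for all t ∈ [0, T]. Then r(t) ≥ r₀ + t·√(1 − h²/a²) for all t ∈ [0, T]; in particular, if T ≥ −r₀/√(1 − h²/a²) then there exists t₀ ∈ [0, T] with r(t₀) = 0, i.e. the geodesic crosses the wormhole throat. -/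
theorem wormhole_geodesic_crosses_throat (a h r₀ T : ℝ) (ha : 0 < a) (hh : h ^ 2 < a ^ 2)
    (hr₀ : r₀ < 0) (hT : 0 ≤ T) (r : ℝ → ℝ) (hr0 : r 0 = r₀)
    (hderiv : ∀ t ∈ Set.Icc (0 : ℝ) T,
      HasDerivAt r (Real.sqrt (1 - h ^ 2 / (r t ^ 2 + a ^ 2))) t) :
    (∀ t ∈ Set.Icc (0 : ℝ) T, r₀ + t * Real.sqrt (1 - h ^ 2 / a ^ 2) ≤ r t) ∧
    (-r₀ / Real.sqrt (1 - h ^ 2 / a ^ 2) ≤ T → ∃ t₀ ∈ Set.Icc (0 : ℝ) T, r t₀ = 0) := by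
  set c := Real.sqrt (1 - h ^ 2 / a ^ 2) with hc
  have ha2 : (0:ℝ) < a ^ 2 := by positivity
  have h1 : 0 < 1 - h ^ 2 / a ^ 2 := by
    rw [sub_pos, div_lt_one ha2]; exact hh
  have hcpos : 0 < c := Real.sqrt_pos.mpr h1
  -- derivative lower bound
  have hbound : ∀ t, c ≤ Real.sqrt (1 - h ^ 2 / (r t ^ 2 + a ^ 2)) := by
    intro t
    apply Real.sqrt_le_sqrt
    have hle : h ^ 2 / (r t ^ 2 + a ^ 2) ≤ h ^ 2 / a ^ 2 :=
      div_le_div_of_nonneg_left (by positivity) ha2 (by nlinarith [sq_nonneg (r t)])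
    linarith
  -- define g t = r t - t * c, monotone on [0,T]
  have hg : MonotoneOn (fun t => r t - t * c) (Set.Icc 0 T) := by
    apply monotoneOn_of_deriv_nonneg (convex_Icc 0 T)
    · apply ContinuousOn.sub
      · exact fun t ht => ((hderiv t ht).continuousAt).continuousWithinAt
      · exact (continuous_id.mul continuous_const).continuousOn
    · intro t ht
      rw [interior_Icc] at ht
      exact ((hderiv t (Set.mem_Icc_of_Ioo ht)).sub
        ((hasDerivAt_id t).mul_const c)).differentiableAt.differentiableWithinAt
    · intro t ht
      rw [interior_Icc] at ht
      have hd := (hderiv t (Set.mem_Icc_of_Ioo ht)).sub ((hasDerivAt_id t).mul_const c)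
      simp only [id_eq] at hd
      rw [show (fun t => r t - t * c) = (r - fun y => y * c) from rfl, hd.deriv]
      simp only [one_mul]
      linarith [hbound t]
  have hmain : ∀ t ∈ Set.Icc (0:ℝ) T, r₀ + t * c ≤ r t := by
    intro t ht
    have h0 : (0:ℝ) ∈ Set.Icc (0:ℝ) T := Set.mem_Icc.mpr ⟨le_refl _, hT⟩
    have := hg h0 ht ht.1
    simp only [hr0, zero_mul, sub_zero] at this
    linarith
  refine ⟨hmain, fun hTge => ?_⟩
  set t₁ := -r₀ / c with ht₁
  have ht₁pos : 0 ≤ t₁ := div_nonneg (by linarith) hcpos.le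
  have ht₁mem : t₁ ∈ Set.Icc (0:ℝ) T := Set.mem_Icc.mpr ⟨ht₁pos, hTge⟩
  have hrt₁ : 0 ≤ r t₁ := by
    have := hmain t₁ ht₁mem
    have : r₀ + t₁ * c = 0 := by
      rw [ht₁, div_mul_cancel₀ _ hcpos.ne']; ring
    linarith [hmain t₁ ht₁mem]
  -- IVT on [0, t₁]
  have hcont : ContinuousOn r (Set.Icc 0 t₁) := fun t ht =>
    ((hderiv t ⟨ht.1, ht.2.trans hTge⟩).continuousAt).continuousWithinAt
  have hsub : Set.Icc (r 0) (r t₁) ⊆ r '' Set.Icc 0 t₁ :=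
    intermediate_value_Icc ht₁pos hcont
  have h0mem : (0:ℝ) ∈ Set.Icc (r 0) (r t₁) := by
    rw [hr0]; exact ⟨hr₀.le, hrt₁⟩
  obtain ⟨t₀, ht₀, hrt₀⟩ := hsub h0mem
  exact ⟨t₀, ⟨ht₀.1, ht₀.2.trans hTge⟩, hrt₀⟩
end

section
/- Let a > 0 and suppose r : [0, ∞) → ℝ is differentiable with r(0) = r₀ < 0 and r′(t) = √(1 − a²/(r(t)² + a²)) for all t ≥ 0. Then r(t) ≤ −|r₀|·e^{−t/a} for all t ≥ 0; in particular r(t) < 0 for all t ≥ 0, i.e. the geodesic never reaches the throat at r = 0. -/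
lemma wormhole_sqrt_bound (a x : ℝ) (ha : 0 < a) :
    Real.sqrt (1 - a ^ 2 / (x ^ 2 + a ^ 2)) ≤ |x| / a := by
  have hden : x ^ 2 + a ^ 2 ≠ 0 := by positivity
  have h1 : (1 : ℝ) - a ^ 2 / (x ^ 2 + a ^ 2) = x ^ 2 / (x ^ 2 + a ^ 2) := by
    field_simp
    ring
  rw [h1]
  have h2 : x ^ 2 / (x ^ 2 + a ^ 2) ≤ x ^ 2 / a ^ 2 := by
    apply div_le_div_of_nonneg_left (by positivity) (by positivity) (by nlinarith)
  calc Real.sqrt (x ^ 2 / (x ^ 2 + a ^ 2)) ≤ Real.sqrt (x ^ 2 / a ^ 2) :=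
        Real.sqrt_le_sqrt h2
    _ = |x| / a := by
        rw [← div_pow, Real.sqrt_sq_eq_abs, abs_div, abs_of_pos ha]

theorem wormhole_critical_geodesic_never_crosses_throat (a r₀ : ℝ) (ha : 0 < a)
    (hr₀ : r₀ < 0) (r : ℝ → ℝ) (hr0 : r 0 = r₀)
    (hderiv : ∀ t : ℝ, 0 ≤ t →
      HasDerivAt r (Real.sqrt (1 - a ^ 2 / (r t ^ 2 + a ^ 2))) t) :
    ∀ t : ℝ, 0 ≤ t → r t ≤ -|r₀| * Real.exp (-t / a) ∧ r t < 0 := by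
  set g : ℝ → ℝ := fun t => r t * Real.exp (t / a) with hg
  have hgd : ∀ t, 0 ≤ t → HasDerivAt g
      (Real.sqrt (1 - a ^ 2 / (r t ^ 2 + a ^ 2)) * Real.exp (t / a)
        + r t * (Real.exp (t / a) * (1 / a))) t := by
    intro t ht
    have hlin : HasDerivAt (fun t : ℝ => t / a) (1 / a) t := (hasDerivAt_id t).div_const a
    have he : HasDerivAt (fun t : ℝ => Real.exp (t / a)) (Real.exp (t / a) * (1 / a)) t :=
      (Real.hasDerivAt_exp _).comp t hlin
    exact (hderiv t ht).mul he
  have key : ∀ b : ℝ, 0 ≤ b → g b ≤ r₀ := by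
    intro b hb
    have hsub : Set.Icc (0 : ℝ) b ⊆ {t | g t ≤ r₀} := by
      apply IsClosed.Icc_subset_of_forall_exists_gt
      · have hcont : ContinuousOn g (Set.Icc (0 : ℝ) b) := fun t ht =>
          ((hgd t ht.1).continuousAt).continuousWithinAt
        have := hcont.preimage_isClosed_of_isClosed isClosed_Icc (isClosed_Iic (a := r₀))
        convert this using 1
        ext t
        simp [Set.mem_inter_iff, and_comm]
      · simp [hg, hr0]
      · rintro x ⟨hxs, hx0, hxb⟩ y hy
        have hex : (0 : ℝ) < Real.exp (x / a) := Real.exp_pos _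
        have hrx : r x < 0 := by
          by_contra h
          push_neg at h
          have : 0 ≤ g x := mul_nonneg h hex.le
          linarith [Set.mem_setOf_eq ▸ hxs, this]
        have hrc : ContinuousAt r x := (hderiv x hx0).continuousAt
        have hev : ∀ᶠ t in nhds x, r t < 0 :=
          hrc.eventually ((isOpen_Iio (a := (0:ℝ))).eventually_mem hrx)
        obtain ⟨δ, hδ, hδ'⟩ := Metric.eventually_nhds_iff.mp hev
        set z := min (x + δ / 2) y with hz
        have hxz : x < z := lt_min (by linarith) hy
        have hanti : AntitoneOn g (Set.Icc x z) := by
          apply antitoneOn_of_deriv_nonpos (convex_Icc x z)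
          · exact fun t ht => ((hgd t (hx0.trans ht.1)).continuousAt).continuousWithinAt
          · intro t ht
            rw [interior_Icc] at ht
            exact ((hgd t (hx0.trans ht.1.le)).differentiableAt).differentiableWithinAt
          · intro t ht
            rw [interior_Icc] at ht
            have ht0 : 0 ≤ t := hx0.trans ht.1.le
            have hrt : r t < 0 := by
              apply hδ'
              rw [Real.dist_eq, abs_lt]
              obtain ⟨ht1, ht2⟩ := ht
              have : t < x + δ / 2 := lt_of_lt_of_le ht2 (min_le_left _ _)
              exact ⟨by linarith, by linarith⟩
            rw [(hgd t ht0).deriv]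
            have hs : Real.sqrt (1 - a ^ 2 / (r t ^ 2 + a ^ 2)) ≤ -r t / a := by
              have := wormhole_sqrt_bound a (r t) ha
              rwa [abs_of_neg hrt] at this
            have het : (0 : ℝ) < Real.exp (t / a) := Real.exp_pos _
            have h1 : Real.sqrt (1 - a ^ 2 / (r t ^ 2 + a ^ 2)) * Real.exp (t / a)
                ≤ (-r t / a) * Real.exp (t / a) := mul_le_mul_of_nonneg_right hs het.le
            have h0 : -r t / a * Real.exp (t / a)
                + r t * (Real.exp (t / a) * (1 / a)) = 0 := by ring
            linarith [h1, h0]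
        refine ⟨z, ?_, hxz, min_le_right _ _⟩
        have hgz : g z ≤ g x :=
          hanti (Set.left_mem_Icc.mpr hxz.le) (Set.right_mem_Icc.mpr hxz.le) hxz.le
        exact le_trans hgz hxs
    exact hsub ⟨hb, le_refl b⟩
  intro t ht
  have hk := key t ht
  have hex : (0 : ℝ) < Real.exp (t / a) := Real.exp_pos _
  have h1 : r t ≤ r₀ / Real.exp (t / a) := (le_div_iff₀ hex).mpr hk
  have h2 : r₀ / Real.exp (t / a) = -|r₀| * Real.exp (-t / a) := by
    rw [abs_of_neg hr₀, neg_neg, neg_div, Real.exp_neg, div_eq_mul_inv]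
  have h3 : -|r₀| * Real.exp (-t / a) < 0 := by
    have : (0:ℝ) < |r₀| := abs_pos.mpr hr₀.ne
    have := Real.exp_pos (-t / a)
    nlinarith
  exact ⟨h2 ▸ h1, lt_of_le_of_lt (h2 ▸ h1) h3⟩
end

section
/- Let a > 0 and 0 < h < a, and set k = h/a. Then the function r ↦ h/√((r² + a²)(r² + a² − h²)) is integrable on ℝ and ∫_{−∞}^{∞} h / √((r² + a²)(r² + a² − h²)) dr = 2k·K(k), where K(k) = ∫_{0}^{1} dt / √((1 − t²)(1 − k²t²)) is the complete elliptic integral of the first kind. -/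
open MeasureTheory

/-- The complete elliptic integral of the first kind,
`K(k) = ∫₀¹ dt / √((1 − t²)(1 − k²t²))`. -/
noncomputable def ellipticK (k : ℝ) : ℝ :=
  ∫ t in Set.Ioo (0 : ℝ) 1, 1 / Real.sqrt ((1 - t ^ 2) * (1 - k ^ 2 * t ^ 2))

private lemma wormhole_deriv (a t : ℝ) (ht0 : 0 < t) (ht1 : t < 1) :
    HasDerivAt (fun t : ℝ => a * Real.sqrt (1 - t ^ 2) / t)
      (-(a / (t ^ 2 * Real.sqrt (1 - t ^ 2)))) t := by
  have hu' : 0 < 1 - t ^ 2 := by nlinarith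
  have hsq : Real.sqrt (1 - t ^ 2) ^ 2 = 1 - t ^ 2 := Real.sq_sqrt hu'.le
  have hspos : 0 < Real.sqrt (1 - t ^ 2) := Real.sqrt_pos.2 hu'
  have hd1 : HasDerivAt (fun t : ℝ => 1 - t ^ 2) (-(2 * t)) t := by
    simpa using ((hasDerivAt_pow 2 t).const_sub 1)
  have hd2 : HasDerivAt (fun t : ℝ => Real.sqrt (1 - t ^ 2))
      (1 / (2 * Real.sqrt (1 - t ^ 2)) * (-(2 * t))) t :=
    (Real.hasDerivAt_sqrt hu'.ne').comp t hd1
  have hd3 := (hd2.const_mul a).div (hasDerivAt_id t) ht0.ne'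
  refine hd3.congr_deriv ?_
  symm
  simp only [id]
  field_simp
  linear_combination a * hsq

private lemma wormhole_injOn (a : ℝ) (ha : 0 < a) :
    Set.InjOn (fun t : ℝ => a * Real.sqrt (1 - t ^ 2) / t) (Set.Ioo (0:ℝ) 1) := by
  rintro t ⟨ht0, ht1⟩ s ⟨hs0, hs1⟩ hts
  simp only at hts
  have hut : Real.sqrt (1 - t ^ 2) ^ 2 = 1 - t ^ 2 := Real.sq_sqrt (by nlinarith)
  have hus : Real.sqrt (1 - s ^ 2) ^ 2 = 1 - s ^ 2 := Real.sq_sqrt (by nlinarith)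
  have h1 : a * Real.sqrt (1 - t ^ 2) * s = a * Real.sqrt (1 - s ^ 2) * t := by
    field_simp at hts
    linear_combination a * hts
  have h1sq := congrArg (· ^ 2) h1
  have e2 : a ^ 2 * (s ^ 2 - t ^ 2) = 0 := by
    linear_combination h1sq - a ^ 2 * s ^ 2 * hut + a ^ 2 * t ^ 2 * hus
  have e3 : (t - s) * (t + s) = 0 := by
    have ha2 : (a:ℝ) ^ 2 ≠ 0 := by positivity
    rcases mul_eq_zero.1 e2 with h4 | h4
    · exact absurd h4 ha2
    · linear_combination -h4
  rcases mul_eq_zero.1 e3 with h4 | h4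
  · linarith
  · linarith

private lemma wormhole_image (a : ℝ) (ha : 0 < a) :
    (fun t : ℝ => a * Real.sqrt (1 - t ^ 2) / t) '' Set.Ioo (0:ℝ) 1 = Set.Ioi (0:ℝ) := by
  apply Set.eq_of_subset_of_subset
  · rintro x ⟨t, ⟨ht0, ht1⟩, rfl⟩
    have : 0 < Real.sqrt (1 - t ^ 2) := Real.sqrt_pos.2 (by nlinarith)
    exact div_pos (mul_pos ha this) ht0
  · rintro r (hr : 0 < r)
    set S : ℝ := Real.sqrt (r ^ 2 + a ^ 2) with hSdef
    have hS : 0 < S := Real.sqrt_pos.2 (by positivity)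
    have hS2 : S ^ 2 = r ^ 2 + a ^ 2 := Real.sq_sqrt (by positivity)
    have haS : a < S := by
      rw [hSdef]
      exact (Real.lt_sqrt (by positivity)).2 (by nlinarith)
    refine ⟨a / S, ⟨div_pos ha hS, (div_lt_one hS).2 haS⟩, ?_⟩
    have h1 : (1:ℝ) - (a / S) ^ 2 = (r / S) ^ 2 := by
      field_simp
      linear_combination hS2
    have h2 : Real.sqrt (1 - (a / S) ^ 2) = r / S := by
      rw [h1, Real.sqrt_sq (by positivity)]
    simp only [h2]
    field_simp

private lemma wormhole_pointwise (a h t : ℝ) (ha : 0 < a) (hh0 : 0 < h) (hha : h < a)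
    (ht0 : 0 < t) (ht1 : t < 1) :
    |(-(a / (t ^ 2 * Real.sqrt (1 - t ^ 2))))| *
      (h / Real.sqrt (((a * Real.sqrt (1 - t ^ 2) / t) ^ 2 + a ^ 2) *
        ((a * Real.sqrt (1 - t ^ 2) / t) ^ 2 + a ^ 2 - h ^ 2))) =
    (h / a) * (1 / Real.sqrt ((1 - t ^ 2) * (1 - (h / a) ^ 2 * t ^ 2))) := by
  have hu' : 0 < 1 - t ^ 2 := by nlinarith
  set u : ℝ := Real.sqrt (1 - t ^ 2) with hudef
  have hupos : 0 < u := Real.sqrt_pos.2 hu'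
  have hu2 : u ^ 2 = 1 - t ^ 2 := Real.sq_sqrt hu'.le
  have hv' : 0 < 1 - (h / a) ^ 2 * t ^ 2 := by
    have h1 : (h / a) ^ 2 < 1 := by
      rw [div_pow, div_lt_one (by positivity)]
      nlinarith
    nlinarith [sq_nonneg t, sq_nonneg (h / a)]
  set v : ℝ := Real.sqrt (1 - (h / a) ^ 2 * t ^ 2) with hvdef
  have hvpos : 0 < v := Real.sqrt_pos.2 hv'
  have hv2 : v ^ 2 = 1 - (h / a) ^ 2 * t ^ 2 := Real.sq_sqrt hv'.le
  have habs : |(-(a / (t ^ 2 * u)))| = a / (t ^ 2 * u) := by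
    rw [abs_neg, abs_of_pos (by positivity)]
  have hAB : ((a * u / t) ^ 2 + a ^ 2) * ((a * u / t) ^ 2 + a ^ 2 - h ^ 2) =
      (a ^ 2 / t ^ 2) ^ 2 * (1 - (h / a) ^ 2 * t ^ 2) := by
    have e1 : (a * u / t) ^ 2 + a ^ 2 = a ^ 2 / t ^ 2 := by
      rw [div_pow, mul_pow, hu2]; field_simp; ring
    have e2 : (a * u / t) ^ 2 + a ^ 2 - h ^ 2 = (a ^ 2 / t ^ 2) * (1 - (h / a) ^ 2 * t ^ 2) := by
      rw [div_pow, mul_pow, hu2]; field_simp; ring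
    rw [e2]
    rw [show ((a * u / t) ^ 2 + a ^ 2) = a ^ 2 / t ^ 2 from e1]
    ring
  have hsqrtAB : Real.sqrt (((a * u / t) ^ 2 + a ^ 2) * ((a * u / t) ^ 2 + a ^ 2 - h ^ 2)) =
      (a ^ 2 / t ^ 2) * v := by
    rw [hAB, Real.sqrt_mul (sq_nonneg _), Real.sqrt_sq (by positivity), hvdef]
  have hsqrtmul : Real.sqrt ((1 - t ^ 2) * (1 - (h / a) ^ 2 * t ^ 2)) = u * v := by
    rw [Real.sqrt_mul hu'.le, hudef, hvdef]
  rw [habs, hsqrtAB, hsqrtmul]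
  field_simp

theorem wormhole_angle_change_eq_elliptic (a h : ℝ) (ha : 0 < a) (hh0 : 0 < h)
    (hha : h < a) :
    Integrable (fun r : ℝ => h / Real.sqrt ((r ^ 2 + a ^ 2) * (r ^ 2 + a ^ 2 - h ^ 2))) ∧
    ∫ r : ℝ, h / Real.sqrt ((r ^ 2 + a ^ 2) * (r ^ 2 + a ^ 2 - h ^ 2)) =
      2 * (h / a) * ellipticK (h / a) := by
  have hc2 : (0:ℝ) < a ^ 2 - h ^ 2 := by nlinarith
  have hA : ∀ r : ℝ, (0:ℝ) < r ^ 2 + a ^ 2 := fun r => by positivity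
  have hB : ∀ r : ℝ, (0:ℝ) < r ^ 2 + a ^ 2 - h ^ 2 := fun r => by nlinarith [sq_nonneg r]
  have hprod : ∀ r : ℝ, (0:ℝ) < (r ^ 2 + a ^ 2) * (r ^ 2 + a ^ 2 - h ^ 2) :=
    fun r => mul_pos (hA r) (hB r)
  set F : ℝ → ℝ := fun r => h / Real.sqrt ((r ^ 2 + a ^ 2) * (r ^ 2 + a ^ 2 - h ^ 2)) with hF
  -- continuity, hence measurability
  have hFcont : Continuous F := by
    apply Continuous.div continuous_const
    · exact Real.continuous_sqrt.comp (by continuity)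
    · intro r
      exact ne_of_gt (Real.sqrt_pos.2 (hprod r))
  -- integrability
  have hint : Integrable F := by
    have hG : Integrable (fun r : ℝ => h * ((a ^ 2 - h ^ 2) + r ^ 2)⁻¹) := by
      set c : ℝ := Real.sqrt (a ^ 2 - h ^ 2) with hcdef
      have hc : 0 < c := Real.sqrt_pos.2 hc2
      have hc2' : c ^ 2 = a ^ 2 - h ^ 2 := Real.sq_sqrt hc2.le
      have h1 : Integrable (fun x : ℝ => (1 + (x / c) ^ 2)⁻¹) :=
        integrable_inv_one_add_sq.comp_div hc.ne'
      have h2 : Integrable (fun x : ℝ => h * (c ^ 2)⁻¹ * (1 + (x / c) ^ 2)⁻¹) :=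
        h1.const_mul _
      refine h2.congr (Filter.Eventually.of_forall fun x => ?_)
      rw [← hc2']
      field_simp
    refine hG.mono' hFcont.aestronglyMeasurable (Filter.Eventually.of_forall fun r => ?_)
    have hFnn : 0 ≤ F r := div_nonneg hh0.le (Real.sqrt_nonneg _)
    rw [Real.norm_of_nonneg hFnn]
    have hle : (r ^ 2 + a ^ 2 - h ^ 2) ≤
        Real.sqrt ((r ^ 2 + a ^ 2) * (r ^ 2 + a ^ 2 - h ^ 2)) := by
      rw [Real.le_sqrt (hB r).le]
      · nlinarith [hB r, sq_nonneg r, sq_nonneg h]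
      · exact (hprod r).le
    calc F r ≤ h / (r ^ 2 + a ^ 2 - h ^ 2) :=
          div_le_div_of_nonneg_left hh0.le (hB r) hle
      _ = h * ((a ^ 2 - h ^ 2) + r ^ 2)⁻¹ := by rw [div_eq_mul_inv]; ring_nf
  refine ⟨hint, ?_⟩
  -- reduce to the integral over (0, ∞)
  have hhalf : ∫ x : ℝ, F |x| = 2 * ∫ x in Set.Ioi (0:ℝ), F x := integral_comp_abs
  have habs : ∀ x : ℝ, F |x| = F x := fun x => by simp only [hF, sq_abs]
  simp only [habs] at hhalf
  -- the substitution r = g t with g t = a √(1 - t²) / t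
  set g : ℝ → ℝ := fun t => a * Real.sqrt (1 - t ^ 2) / t with hg
  set g' : ℝ → ℝ := fun t => -(a / (t ^ 2 * Real.sqrt (1 - t ^ 2))) with hg'
  have hderiv : ∀ t ∈ Set.Ioo (0:ℝ) 1, HasDerivWithinAt g (g' t) (Set.Ioo (0:ℝ) 1) t :=
    fun t ht => (wormhole_deriv a t ht.1 ht.2).hasDerivWithinAt
  have hsub : ∫ x in Set.Ioi (0:ℝ), F x = ∫ t in Set.Ioo (0:ℝ) 1, |g' t| • F (g t) := by
    rw [← wormhole_image a ha]
    exact integral_image_eq_integral_abs_deriv_smul measurableSet_Ioo hderiv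
      (wormhole_injOn a ha) F
  have hpt : ∀ t ∈ Set.Ioo (0:ℝ) 1, |g' t| • F (g t) =
      (h / a) * (1 / Real.sqrt ((1 - t ^ 2) * (1 - (h / a) ^ 2 * t ^ 2))) := by
    rintro t ⟨ht0, ht1⟩
    rw [smul_eq_mul]
    exact wormhole_pointwise a h t ha hh0 hha ht0 ht1
  have hK : ∫ t in Set.Ioo (0:ℝ) 1, |g' t| • F (g t) = (h / a) * ellipticK (h / a) := by
    rw [setIntegral_congr_fun measurableSet_Ioo hpt]
    rw [ellipticK]
    exact integral_const_mul _ _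
  rw [hhalf, hsub, hK]
  ring
end

section
/- There exists a unique k* ∈ (0, 1) such that 2k*·K(k*) = π, where K(k) = ∫_{0}^{1} dt / √((1 − t²)(1 − k²t²)). -/
open MeasureTheory

open Set Filter

lemma denom_pos {k t : ℝ} (hk0 : 0 ≤ k) (hk1 : k < 1) (ht : t ∈ Set.Ioo (0:ℝ) 1) :
    0 < (1 - t ^ 2) * (1 - k ^ 2 * t ^ 2) := by
  obtain ⟨ht0, ht1⟩ := ht
  have h1 : t ^ 2 < 1 := by nlinarith
  have h2 : k ^ 2 * t ^ 2 < 1 := by nlinarith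
  nlinarith

lemma F_meas (k : ℝ) :
    Measurable (fun t : ℝ => 1 / Real.sqrt ((1 - t ^ 2) * (1 - k ^ 2 * t ^ 2))) := by
  simp only [one_div]
  exact ((Real.continuous_sqrt.comp (by continuity)).measurable).inv

lemma int_g : IntegrableOn (fun t : ℝ => (1 - t) ^ (-(1/2) : ℝ)) (Set.Ioo (0:ℝ) 1) volume := by
  have h0 : IntervalIntegrable (fun x : ℝ => x ^ (-(1/2) : ℝ)) volume 0 1 :=
    intervalIntegral.intervalIntegrable_rpow' (by norm_num)
  have h1 : IntervalIntegrable (fun x : ℝ => (1 - x) ^ (-(1/2) : ℝ)) volume 0 1 := by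
    have := (h0.comp_sub_left 1).symm
    norm_num at this
    exact this
  have h2 := (intervalIntegrable_iff_integrableOn_Ioc_of_le (by norm_num : (0:ℝ) ≤ 1)).mp h1
  exact h2.mono_set Set.Ioo_subset_Ioc_self

lemma integral_g : ∫ t in Set.Ioo (0:ℝ) 1, (1 - t) ^ (-(1/2) : ℝ) = 2 := by
  rw [← integral_Ioc_eq_integral_Ioo,
    ← intervalIntegral.integral_of_le (by norm_num : (0:ℝ) ≤ 1)]
  have h := intervalIntegral.integral_comp_sub_left (a := (0:ℝ)) (b := 1)
    (fun x : ℝ => x ^ (-(1/2) : ℝ)) 1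
  norm_num at h
  rw [h, integral_rpow (Or.inl (by norm_num))]
  rw [Real.zero_rpow (by norm_num), Real.one_rpow]
  norm_num

/-- The key pointwise bound. -/
lemma F_le {k b t : ℝ} (hk0 : 0 ≤ k) (hkb : k ≤ b) (hb1 : b < 1)
    (ht : t ∈ Set.Ioo (0:ℝ) 1) :
    1 / Real.sqrt ((1 - t ^ 2) * (1 - k ^ 2 * t ^ 2)) ≤
      (1 / Real.sqrt (1 - b ^ 2)) * (1 - t) ^ (-(1/2) : ℝ) := by
  obtain ⟨ht0, ht1⟩ := ht
  have hb0 : 0 ≤ b := le_trans hk0 hkb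
  have h1 : (0:ℝ) < 1 - b ^ 2 := by nlinarith
  have h2 : (0:ℝ) < 1 - t := by linarith
  have key : (1 - b ^ 2) * (1 - t) ≤ (1 - t ^ 2) * (1 - k ^ 2 * t ^ 2) := by
    have hk2 : k ^ 2 ≤ b ^ 2 := by nlinarith
    have ht2 : t ^ 2 ≤ 1 := by nlinarith
    have h3 : 1 - b ^ 2 ≤ 1 - k ^ 2 * t ^ 2 := by
      nlinarith [mul_le_mul hk2 ht2 (sq_nonneg t) (sq_nonneg b)]
    have h4 : 1 - t ≤ 1 - t ^ 2 := by nlinarith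
    calc (1 - b ^ 2) * (1 - t) ≤ (1 - t ^ 2) * (1 - b ^ 2) := by nlinarith
    _ ≤ (1 - t ^ 2) * (1 - k ^ 2 * t ^ 2) := by nlinarith
  have hpos : (0:ℝ) < (1 - b ^ 2) * (1 - t) := mul_pos h1 h2
  have hsq : Real.sqrt ((1 - b ^ 2) * (1 - t)) ≤
      Real.sqrt ((1 - t ^ 2) * (1 - k ^ 2 * t ^ 2)) := Real.sqrt_le_sqrt key
  have hs0 : 0 < Real.sqrt ((1 - b ^ 2) * (1 - t)) := Real.sqrt_pos.mpr hpos
  have := one_div_le_one_div_of_le hs0 hsq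
  refine this.trans_eq ?_
  rw [Real.sqrt_mul h1.le, Real.rpow_neg h2.le, Real.sqrt_eq_rpow (1-t),
    one_div, mul_inv, one_div, one_div]

lemma integrableF {k : ℝ} (hk0 : 0 ≤ k) (hk1 : k < 1) :
    IntegrableOn (fun t : ℝ => 1 / Real.sqrt ((1 - t ^ 2) * (1 - k ^ 2 * t ^ 2)))
      (Set.Ioo (0:ℝ) 1) volume := by
  refine Integrable.mono' (int_g.const_mul (1 / Real.sqrt (1 - k ^ 2)))
    ((F_meas k).aestronglyMeasurable) ?_
  filter_upwards [ae_restrict_mem measurableSet_Ioo] with t ht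
  rw [Real.norm_of_nonneg (by positivity)]
  exact F_le hk0 le_rfl hk1 ht

lemma K_le {k : ℝ} (hk0 : 0 ≤ k) (hk1 : k < 1) :
    ellipticK k ≤ (1 / Real.sqrt (1 - k ^ 2)) * 2 := by
  have h := setIntegral_mono_on (integrableF hk0 hk1)
    (int_g.const_mul (1 / Real.sqrt (1 - k ^ 2))) measurableSet_Ioo
    (fun t ht => F_le hk0 le_rfl hk1 ht)
  rw [ellipticK]
  refine h.trans_eq ?_
  rw [MeasureTheory.integral_const_mul, integral_g]

lemma K_mono {k₁ k₂ : ℝ} (h0 : 0 ≤ k₁) (h12 : k₁ ≤ k₂) (h21 : k₂ < 1) :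
    ellipticK k₁ ≤ ellipticK k₂ := by
  refine setIntegral_mono_on (integrableF h0 (lt_of_le_of_lt h12 h21))
    (integrableF (h0.trans h12) h21) measurableSet_Ioo (fun t ht => ?_)
  obtain ⟨ht0, ht1⟩ := ht
  have hd2 : 0 < (1 - t ^ 2) * (1 - k₂ ^ 2 * t ^ 2) :=
    denom_pos (h0.trans h12) h21 ⟨ht0, ht1⟩
  have hle : (1 - t ^ 2) * (1 - k₂ ^ 2 * t ^ 2) ≤ (1 - t ^ 2) * (1 - k₁ ^ 2 * t ^ 2) := by
    have hkk : k₁ ^ 2 * t ^ 2 ≤ k₂ ^ 2 * t ^ 2 :=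
      mul_le_mul_of_nonneg_right (by nlinarith) (sq_nonneg t)
    have ht2 : (0:ℝ) ≤ 1 - t ^ 2 := by nlinarith
    exact mul_le_mul_of_nonneg_left (by linarith) ht2
  exact one_div_le_one_div_of_le (Real.sqrt_pos.mpr hd2) (Real.sqrt_le_sqrt hle)

lemma K_pos {k : ℝ} (hk0 : 0 ≤ k) (hk1 : k < 1) : 0 < ellipticK k := by
  rw [ellipticK]
  rw [setIntegral_pos_iff_support_of_nonneg_ae ?_ (integrableF hk0 hk1)]
  · have hsub : Set.Ioo (0:ℝ) 1 ⊆
        (Function.support fun t => 1 / Real.sqrt ((1 - t ^ 2) * (1 - k ^ 2 * t ^ 2)))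
          ∩ Set.Ioo (0:ℝ) 1 := by
      intro t ht
      refine ⟨?_, ht⟩
      have := denom_pos hk0 hk1 ht
      have hpos : 0 < 1 / Real.sqrt ((1 - t ^ 2) * (1 - k ^ 2 * t ^ 2)) := by positivity
      exact Function.mem_support.mpr (ne_of_gt hpos)
    refine lt_of_lt_of_le ?_ (measure_mono hsub)
    rw [Real.volume_Ioo]
    norm_num
  · filter_upwards [ae_restrict_mem measurableSet_Ioo] with t ht
    have := denom_pos hk0 hk1 ht
    positivity

lemma K_contAt {k₀ : ℝ} (hk : k₀ ∈ Set.Ioo (0:ℝ) 1) : ContinuousAt ellipticK k₀ := by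
  obtain ⟨hk0, hk1⟩ := hk
  set b : ℝ := (1 + k₀) / 2 with hb
  have hb1 : b < 1 := by rw [hb]; linarith
  have hkb : k₀ < b := by rw [hb]; linarith
  have hb0 : 0 < b := by rw [hb]; linarith
  refine MeasureTheory.continuousAt_of_dominated
    (Filter.Eventually.of_forall fun k => (F_meas k).aestronglyMeasurable)
    ?_ (int_g.const_mul (1 / Real.sqrt (1 - b ^ 2))) ?_
  · filter_upwards [isOpen_Ioo.eventually_mem (⟨hk0, hkb⟩ : k₀ ∈ Set.Ioo (0:ℝ) b)] with k hkmem
    filter_upwards [ae_restrict_mem measurableSet_Ioo] with t ht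
    rw [Real.norm_of_nonneg (by positivity)]
    exact F_le hkmem.1.le hkmem.2.le hb1 ht
  · filter_upwards [ae_restrict_mem measurableSet_Ioo] with t ht
    have hd : 0 < (1 - t ^ 2) * (1 - k₀ ^ 2 * t ^ 2) := denom_pos hk0.le hk1 ht
    refine ContinuousAt.div continuousAt_const ?_ (ne_of_gt (Real.sqrt_pos.mpr hd))
    exact Real.continuous_sqrt.continuousAt.comp (by fun_prop)

lemma f_lt_f {a b : ℝ} (ha : 0 < a) (hab : a < b) (hb : b < 1) :
    2 * a * ellipticK a < 2 * b * ellipticK b := by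
  have h1 : 2 * a * ellipticK a ≤ 2 * a * ellipticK b :=
    mul_le_mul_of_nonneg_left (K_mono ha.le hab.le hb) (by linarith)
  have h2 : 2 * a * ellipticK b < 2 * b * ellipticK b :=
    mul_lt_mul_of_pos_right (by linarith) (K_pos (by linarith) hb)
  linarith

lemma f_quarter : 2 * (1/4 : ℝ) * ellipticK (1/4) ≤ 2 := by
  have h := K_le (k := 1/4) (by norm_num) (by norm_num)
  have hs : (1/2 : ℝ) ≤ Real.sqrt (1 - (1/4:ℝ) ^ 2) := by
    rw [show (1:ℝ) - (1/4:ℝ)^2 = 15/16 by norm_num]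
    nlinarith [Real.sq_sqrt (show (0:ℝ) ≤ 15/16 by norm_num),
      Real.sqrt_nonneg (15/16 : ℝ)]
  have hpos : (0:ℝ) < Real.sqrt (1 - (1/4:ℝ) ^ 2) := by linarith
  have : (1:ℝ) / Real.sqrt (1 - (1/4:ℝ)^2) ≤ 2 := by
    rw [div_le_iff₀ hpos]; linarith
  nlinarith [K_pos (show (0:ℝ) ≤ 1/4 by norm_num) (show (1/4:ℝ) < 1 by norm_num)]

lemma K_lower : (6 : ℝ) / Real.sqrt 2 ≤ ellipticK (1 - Real.exp (-12)) := by
  set ε : ℝ := Real.exp (-12) with hεdef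
  have hε0 : 0 < ε := Real.exp_pos _
  have hε2 : ε < 1/2 := by
    have h13 : (13:ℝ) ≤ Real.exp 12 := by
      nlinarith [Real.add_one_le_exp (12:ℝ)]
    have : ε = (Real.exp 12)⁻¹ := by rw [hεdef, Real.exp_neg]
    rw [this]
    rw [inv_lt_comm₀ (by linarith) (by norm_num)]
    linarith
  set k : ℝ := 1 - ε with hkdef
  have hk0 : (0:ℝ) < k := by rw [hkdef]; linarith
  have hk1 : k < 1 := by rw [hkdef]; linarith
  have hs2 : (0:ℝ) < Real.sqrt 2 := Real.sqrt_pos.mpr (by norm_num)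
  -- pointwise bound on Ioo 0 k
  have hpt : ∀ t ∈ Set.Ioo (0:ℝ) k,
      (1 / (2 * Real.sqrt 2)) * (1 / (1 - t)) ≤
        1 / Real.sqrt ((1 - t ^ 2) * (1 - k ^ 2 * t ^ 2)) := by
    intro t ht
    obtain ⟨ht0, htk⟩ := ht
    have ht1 : t < 1 := lt_trans htk hk1
    have htu : 0 < 1 - t := by linarith
    have hεt : ε < 1 - t := by rw [hkdef] at htk; linarith
    have hprod : (1 - t ^ 2) * (1 - k ^ 2 * t ^ 2) ≤ 8 * (1 - t) ^ 2 := by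
      have h1 : 1 - t ^ 2 ≤ 2 * (1 - t) := by nlinarith
      have hkt : 1 - k * t ≤ 2 * (1 - t) := by
        rw [hkdef]; nlinarith
      have h2 : 1 - k ^ 2 * t ^ 2 ≤ 4 * (1 - t) := by
        have hkt1 : 1 + k * t ≤ 2 := by nlinarith
        nlinarith [mul_nonneg hk0.le ht0.le]
      have hnn : (0:ℝ) ≤ 1 - k ^ 2 * t ^ 2 := by
        have ha : k * t < 1 := by nlinarith
        have hb : 0 < k * t := mul_pos hk0 ht0
        nlinarith
      calc (1 - t ^ 2) * (1 - k ^ 2 * t ^ 2) ≤ (2 * (1 - t)) * (4 * (1 - t)) :=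
            mul_le_mul h1 h2 hnn (by linarith)
        _ = 8 * (1 - t) ^ 2 := by ring
    have hsqrt : Real.sqrt ((1 - t ^ 2) * (1 - k ^ 2 * t ^ 2)) ≤
        2 * Real.sqrt 2 * (1 - t) := by
      have heq : (8:ℝ) * (1 - t) ^ 2 = (2 * Real.sqrt 2 * (1 - t)) ^ 2 := by
        nlinarith [Real.sq_sqrt (show (0:ℝ) ≤ 2 by norm_num)]
      calc Real.sqrt ((1 - t ^ 2) * (1 - k ^ 2 * t ^ 2))
          ≤ Real.sqrt (8 * (1 - t) ^ 2) := Real.sqrt_le_sqrt hprod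
        _ = 2 * Real.sqrt 2 * (1 - t) := by
            rw [heq, Real.sqrt_sq (by positivity)]
    have hspos : 0 < Real.sqrt ((1 - t ^ 2) * (1 - k ^ 2 * t ^ 2)) :=
      Real.sqrt_pos.mpr (denom_pos hk0.le hk1 ⟨ht0, ht1⟩)
    have := one_div_le_one_div_of_le hspos hsqrt
    calc (1 / (2 * Real.sqrt 2)) * (1 / (1 - t))
        = 1 / (2 * Real.sqrt 2 * (1 - t)) := by
          rw [one_div_mul_one_div]
      _ ≤ 1 / Real.sqrt ((1 - t ^ 2) * (1 - k ^ 2 * t ^ 2)) := this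
  -- integrability of 1/(1-t) on Ioo 0 k
  have hcont : ContinuousOn (fun t : ℝ => 1 / (1 - t)) (Set.Icc (0:ℝ) k) := by
    refine ContinuousOn.div continuousOn_const (by fun_prop) ?_
    intro t ht
    obtain ⟨_, htk⟩ := ht
    have : t < 1 := lt_of_le_of_lt htk hk1
    intro h
    linarith [sub_eq_zero.mp h]
  have hint1 : IntegrableOn (fun t : ℝ => 1 / (1 - t)) (Set.Ioo (0:ℝ) k) volume :=
    (hcont.integrableOn_Icc).mono_set Set.Ioo_subset_Icc_self
  -- value of ∫ 1/(1-t) on Ioo 0 k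
  have hval : ∫ t in Set.Ioo (0:ℝ) k, 1 / (1 - t) = 12 := by
    rw [← integral_Ioc_eq_integral_Ioo, ← intervalIntegral.integral_of_le hk0.le]
    have h := intervalIntegral.integral_comp_sub_left (a := (0:ℝ)) (b := k)
      (fun x : ℝ => 1 / x) 1
    rw [h, show (1:ℝ) - k = ε by rw [hkdef]; ring, sub_zero,
      integral_one_div (by
        intro hmem
        rw [Set.mem_uIcc] at hmem
        rcases hmem with ⟨h1, _⟩ | ⟨_, h2⟩ <;> linarith)]
    rw [one_div, Real.log_inv, hεdef, Real.log_exp]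
    norm_num
  -- chain of integral inequalities
  have hFint : IntegrableOn
      (fun t : ℝ => 1 / Real.sqrt ((1 - t ^ 2) * (1 - k ^ 2 * t ^ 2)))
      (Set.Ioo (0:ℝ) 1) volume := integrableF hk0.le hk1
  have step1 : ∫ t in Set.Ioo (0:ℝ) k, (1 / (2 * Real.sqrt 2)) * (1 / (1 - t)) ≤
      ∫ t in Set.Ioo (0:ℝ) k,
        1 / Real.sqrt ((1 - t ^ 2) * (1 - k ^ 2 * t ^ 2)) :=
    setIntegral_mono_on (hint1.const_mul _)
      (hFint.mono_set (Set.Ioo_subset_Ioo_right hk1.le)) measurableSet_Ioo hpt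
  have step2 : ∫ t in Set.Ioo (0:ℝ) k,
        1 / Real.sqrt ((1 - t ^ 2) * (1 - k ^ 2 * t ^ 2)) ≤ ellipticK k := by
    rw [ellipticK]
    refine setIntegral_mono_set hFint ?_
      ((Set.Ioo_subset_Ioo_right hk1.le).eventuallyLE)
    filter_upwards [ae_restrict_mem measurableSet_Ioo] with t ht
    have := denom_pos hk0.le hk1 ht
    positivity
  have hlhs : ∫ t in Set.Ioo (0:ℝ) k, (1 / (2 * Real.sqrt 2)) * (1 / (1 - t))
      = 6 / Real.sqrt 2 := by
    rw [MeasureTheory.integral_const_mul, hval]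
    field_simp
    ring
  linarith [hlhs ▸ step1, step2]

theorem exists_unique_critical_angular_momentum :
    ∃! k : ℝ, k ∈ Set.Ioo (0 : ℝ) 1 ∧ 2 * k * ellipticK k = Real.pi := by
  set ε : ℝ := Real.exp (-12) with hεdef
  have hε0 : 0 < ε := Real.exp_pos _
  have hε2 : ε < 1/2 := by
    have h13 : (13:ℝ) ≤ Real.exp 12 := by
      nlinarith [Real.add_one_le_exp (12:ℝ)]
    have h' : ε = (Real.exp 12)⁻¹ := by rw [hεdef, Real.exp_neg]
    rw [h', inv_lt_comm₀ (by linarith) (by norm_num)]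
    linarith
  set b : ℝ := 1 - ε with hbdef
  have hb0 : (1/2:ℝ) ≤ b := by rw [hbdef]; linarith
  have hb1 : b < 1 := by rw [hbdef]; linarith
  have hab : (1/4:ℝ) ≤ b := by linarith
  have hsub : Set.Icc (1/4:ℝ) b ⊆ Set.Ioo (0:ℝ) 1 := fun x hx =>
    ⟨by linarith [hx.1], lt_of_le_of_lt hx.2 hb1⟩
  have hcont : ContinuousOn (fun k => 2 * k * ellipticK k) (Set.Icc (1/4:ℝ) b) := by
    intro x hx
    exact (((continuous_const.mul continuous_id).continuousAt).mul
      (K_contAt (hsub hx))).continuousWithinAt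
  have hπhi : Real.pi < 2 * b * ellipticK b := by
    have hK := K_lower
    have hs2 : (0:ℝ) < Real.sqrt 2 := Real.sqrt_pos.mpr (by norm_num)
    have hs15 : Real.sqrt 2 ≤ 3/2 := by
      nlinarith [Real.sq_sqrt (show (0:ℝ) ≤ 2 by norm_num), Real.sqrt_nonneg 2]
    have h4 : (4:ℝ) ≤ 6 / Real.sqrt 2 := by
      rw [le_div_iff₀ hs2]; nlinarith
    have hKpos : 0 < ellipticK b := K_pos (by linarith) hb1
    have h4K : (4:ℝ) ≤ ellipticK b := by
      rw [hbdef, hεdef]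
      exact le_trans h4 hK
    nlinarith [Real.pi_lt_d2, mul_le_mul (show (1:ℝ) ≤ 2 * b by linarith) h4K
      (by norm_num) (by linarith)]
  have hπlo : 2 * (1/4:ℝ) * ellipticK (1/4) < Real.pi := by
    have := f_quarter
    linarith [Real.pi_gt_three]
  have hmem : Real.pi ∈ Set.Icc (2 * (1/4:ℝ) * ellipticK (1/4)) (2 * b * ellipticK b) :=
    ⟨hπlo.le, hπhi.le⟩
  obtain ⟨k, hkmem, hfk⟩ := intermediate_value_Icc hab hcont hmem
  refine ⟨k, ⟨hsub hkmem, hfk⟩, ?_⟩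
  rintro y ⟨hy, hfy⟩
  have hk' : k ∈ Set.Ioo (0:ℝ) 1 := hsub hkmem
  simp only at hfk
  rcases lt_trichotomy y k with h | h | h
  · have := f_lt_f hy.1 h hk'.2
    rw [hfy, hfk] at this
    exact absurd this (lt_irrefl _)
  · exact h
  · have := f_lt_f hk'.1 h hy.2
    rw [hfy, hfk] at this
    exact absurd this (lt_irrefl _)
end
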